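/- Let p₂(x, ξ) = ½(x₁² + ξ₁²) + (x₂² + ξ₂²) and q(x, ξ) = ¼ ( (x₁² − ξ₁²) x₂ + 2 x₁ ξ₁ ξ₂ ) on ℝ⁴. A point (x₁, x₂, ξ₁, ξ₂) with p₂(x, ξ) = 1 satisfies the Lagrange criticality condition ∇q(x, ξ) = μ ∇p₂(x, ξ) for some μ ∈ ℝ if and only if either x₁ = ξ₁ = 0, or ( x₁² + ξ₁² = 4/3, x₂² + ξ₂² = 1/3 and 2 x₁ ξ₁ x₂ = (x₁² − ξ₁²) ξ₂ ). Consequently, the set of critical values of q restricted to the energy surface p₂⁻¹(1) is exactly { −√3/9, 0, √3/9 }, and the critical set consists of exactly three circles, each of which is a single closed trajectory of the Hamiltonian flow of p₂. -/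

import Mathlib

/-- `p₂(v) = ½(x₁² + ξ₁²) + (x₂² + ξ₂²)`, with `v = (x₁, x₂, ξ₁, ξ₂)`. -/
noncomputable def p2v (v : Fin 4 → ℝ) : ℝ :=
  (1 / 2) * ((v 0) ^ 2 + (v 2) ^ 2) + ((v 1) ^ 2 + (v 3) ^ 2)

/-- `q(v) = ¼((x₁² − ξ₁²)x₂ + 2x₁ξ₁ξ₂)`. -/
noncomputable def qbv (v : Fin 4 → ℝ) : ℝ :=
  (1 / 4) * (((v 0) ^ 2 - (v 2) ^ 2) * (v 1) + 2 * (v 0) * (v 2) * (v 3))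

/-- Gradient of a function on `ℝ⁴` via coordinatewise derivatives. -/
noncomputable def grad4 (f : (Fin 4 → ℝ) → ℝ) (v : Fin 4 → ℝ) : Fin 4 → ℝ :=
  fun i => deriv (fun u => f (Function.update v i u)) (v i)

/-- The (1,2)-oscillator Hamiltonian flow of `p₂`. -/
noncomputable def flow12 (t : ℝ) (v : Fin 4 → ℝ) : Fin 4 → ℝ :=
  ![v 0 * Real.cos t + v 2 * Real.sin t,
    v 1 * Real.cos (2 * t) + v 3 * Real.sin (2 * t),
    -(v 0) * Real.sin t + v 2 * Real.cos t,
    -(v 1) * Real.sin (2 * t) + v 3 * Real.cos (2 * t)]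

lemma st15_exists_cos_sin (x y : ℝ) (h : x ^ 2 + y ^ 2 = 1) :
    ∃ t : ℝ, Real.cos t = x ∧ Real.sin t = y := by
  have hx1 : -1 ≤ x := by nlinarith
  have hx2 : x ≤ 1 := by nlinarith
  rcases le_or_gt 0 y with hy | hy
  · refine ⟨Real.arccos x, Real.cos_arccos hx1 hx2, ?_⟩
    rw [Real.sin_arccos]
    have : 1 - x ^ 2 = y ^ 2 := by linarith
    rw [this, Real.sqrt_sq_eq_abs, abs_of_nonneg hy]
  · refine ⟨-Real.arccos x, by rw [Real.cos_neg]; exact Real.cos_arccos hx1 hx2, ?_⟩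
    rw [Real.sin_neg, Real.sin_arccos]
    have : 1 - x ^ 2 = y ^ 2 := by linarith
    rw [this, Real.sqrt_sq_eq_abs, abs_of_neg hy]; ring

lemma st15_grad_p2 (v : Fin 4 → ℝ) : grad4 p2v v = ![v 0, 2 * v 1, v 2, 2 * v 3] := by
  funext i
  fin_cases i <;> simp [grad4, p2v, Function.update]

lemma st15_grad_qb (v : Fin 4 → ℝ) : grad4 qbv v =
    ![(v 0 * v 1 + v 2 * v 3) / 2, (v 0 ^ 2 - v 2 ^ 2) / 4,
      (v 0 * v 3 - v 2 * v 1) / 2, v 0 * v 2 / 2] := by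
  funext i
  fin_cases i <;> simp [grad4, qbv, Function.update] <;> ring_nf
  · have h : HasDerivAt (fun x => x * v 2 * v 3 * 2 + x ^ 2 * v 1 - v 2 ^ 2 * v 1) _ (v 0) :=
      (((((hasDerivAt_id' (x := v 0)).mul_const (v 2)).mul_const (v 3)).mul_const 2).add
        ((hasDerivAt_pow 2 (v 0)).mul_const (v 1)) |>.sub_const (v 2 ^ 2 * v 1))
    rw [h.deriv]
    push_cast; ring
  · have h : HasDerivAt (fun x => v 0 * x * v 3 * 2 + v 0 ^ 2 * v 1 - x ^ 2 * v 1) _ (v 2) :=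
      (((((hasDerivAt_id' (x := v 2)).const_mul (v 0)).mul_const (v 3)).mul_const 2).add_const
        (v 0 ^ 2 * v 1) |>.sub ((hasDerivAt_pow 2 (v 2)).mul_const (v 1)))
    rw [h.deriv]
    push_cast; ring

lemma st15_lag_iff (v : Fin 4 → ℝ) :
    (∃ μ : ℝ, grad4 qbv v = μ • grad4 p2v v) ↔
    ∃ μ : ℝ, (v 0 * v 1 + v 2 * v 3) / 2 = μ * v 0 ∧
      (v 0 ^ 2 - v 2 ^ 2) / 4 = μ * (2 * v 1) ∧
      (v 0 * v 3 - v 2 * v 1) / 2 = μ * v 2 ∧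
      v 0 * v 2 / 2 = μ * (2 * v 3) := by
  rw [st15_grad_qb, st15_grad_p2]
  constructor
  · rintro ⟨μ, h⟩
    exact ⟨μ, by simpa using congrFun h 0, by simpa using congrFun h 1,
      by simpa using congrFun h 2, by simpa using congrFun h 3⟩
  · rintro ⟨μ, h0, h1, h2, h3⟩
    refine ⟨μ, ?_⟩
    funext i; fin_cases i <;> simp [h0, h1, h2, h3]

lemma st15_part1 : ∀ v : Fin 4 → ℝ, p2v v = 1 →
    ((∃ μ : ℝ, grad4 qbv v = μ • grad4 p2v v) ↔
      ((v 0 = 0 ∧ v 2 = 0) ∨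
       ((v 0) ^ 2 + (v 2) ^ 2 = 4 / 3 ∧ (v 1) ^ 2 + (v 3) ^ 2 = 1 / 3 ∧
         2 * v 0 * v 2 * v 1 = ((v 0) ^ 2 - (v 2) ^ 2) * v 3))) := by
  intro v hp
  unfold p2v at hp
  rw [st15_lag_iff]
  constructor
  · rintro ⟨μ, e1, e2, e3, e4⟩
    by_cases hac : v 0 = 0 ∧ v 2 = 0
    · exact Or.inl hac
    · right
      have hμ : μ ≠ 0 := by
        rintro rfl
        apply hac
        have ha2 : v 0 ^ 2 = v 2 ^ 2 := by linarith [e2]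
        have hac0 : v 0 * v 2 = 0 := by linarith [e4]
        rcases mul_eq_zero.mp hac0 with h | h
        · exact ⟨h, by nlinarith⟩
        · exact ⟨by nlinarith, h⟩
      have hB : 2 * v 0 * v 2 * v 1 = ((v 0) ^ 2 - (v 2) ^ 2) * v 3 := by
        linear_combination 2 * v 2 * e1 - 2 * v 0 * e3
      have key1 : (v 0 ^ 2 - v 2 ^ 2) * v 1 + 2 * v 0 * v 2 * v 3
          = 2 * μ * (v 0 ^ 2 + v 2 ^ 2) := by
        linear_combination 2 * v 0 * e1 + 2 * v 2 * e3
      have key2 : (v 0 ^ 2 - v 2 ^ 2) * v 1 + 2 * v 0 * v 2 * v 3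
          = 8 * μ * (v 1 ^ 2 + v 3 ^ 2) := by
        linear_combination 4 * v 1 * e2 + 4 * v 3 * e4
      have h5 : μ * ((v 0 ^ 2 + v 2 ^ 2) - 4 * (v 1 ^ 2 + v 3 ^ 2)) = 0 := by
        linear_combination (1/2) * key2 - (1/2) * key1
      have h6 := (mul_eq_zero.mp h5).resolve_left hμ
      exact ⟨by linarith, by linarith, hB⟩
  · rintro (⟨h0, h2⟩ | ⟨h1, h2, hB⟩)
    · exact ⟨0, by rw [h0, h2]; ring, by rw [h0, h2]; ring,
        by rw [h0, h2]; ring, by rw [h0, h2]; ring⟩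
    · refine ⟨3 * (((v 0) ^ 2 - (v 2) ^ 2) * v 1 + 2 * v 0 * v 2 * v 3) / 8, ?_, ?_, ?_, ?_⟩
      · linear_combination (-(3/8) * (v 0 * v 1 + v 2 * v 3)) * h1 + ((3/8) * v 2) * hB
      · linear_combination (-(3/4) * ((v 0) ^ 2 - (v 2) ^ 2)) * h2 + (-(3/4) * v 3) * hB
      · linear_combination (-(3/8) * (v 0 * v 3 - v 2 * v 1)) * h1 + (-(3/8) * v 0) * hB
      · linear_combination (-(3/2) * v 0 * v 2) * h2 + ((3/4) * v 1) * hB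

lemma st15_range0 : Set.range (fun t => flow12 t ![0, 1, 0, 0]) =
    {w : Fin 4 → ℝ | w 0 = 0 ∧ w 2 = 0 ∧ w 1 ^ 2 + w 3 ^ 2 = 1} := by
  ext w
  constructor
  · rintro ⟨t, rfl⟩
    refine ⟨by simp [flow12], by simp [flow12], by simp [flow12]⟩
  · rintro ⟨h0, h2, h13⟩
    obtain ⟨θ, hc, hs⟩ := st15_exists_cos_sin (w 1) (-(w 3)) (by linarith [h13])
    refine ⟨θ / 2, ?_⟩
    have ht : 2 * (θ / 2) = θ := by ring
    funext i
    fin_cases i <;> simp [flow12, ht, hc, hs, h0, h2]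

lemma st15_range (r s : ℝ) (hr0 : r ≠ 0) :
    Set.range (fun t => flow12 t ![r, s, 0, 0]) =
    {w : Fin 4 → ℝ | w 0 ^ 2 + w 2 ^ 2 = r ^ 2 ∧ w 1 ^ 2 + w 3 ^ 2 = s ^ 2 ∧
      w 1 * r ^ 2 = s * (w 0 ^ 2 - w 2 ^ 2) ∧ w 3 * r ^ 2 = 2 * s * w 0 * w 2} := by
  ext w
  constructor
  · rintro ⟨t, rfl⟩
    have hc2 := Real.cos_two_mul t
    have hs2 := Real.sin_two_mul t
    have hp1 := Real.sin_sq_add_cos_sq t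
    have hp2 := Real.sin_sq_add_cos_sq (2 * t)
    refine ⟨?_, ?_, ?_, ?_⟩ <;> simp only [flow12, Set.mem_setOf_eq,
      Matrix.cons_val_zero, Matrix.cons_val_one, Matrix.head_cons,
      Matrix.cons_val_two, Matrix.tail_cons, Matrix.cons_val_three]
    · linear_combination r ^ 2 * hp1
    · linear_combination s ^ 2 * hp2
    · linear_combination s * r ^ 2 * hc2 + s * r ^ 2 * hp1
    · linear_combination (-(s * r ^ 2)) * hs2
  · rintro ⟨h1, h2, h3, h4⟩
    obtain ⟨t, hc, hs⟩ := st15_exists_cos_sin (w 0 / r) (-(w 2) / r) (by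
      field_simp
      linear_combination h1)
    refine ⟨t, ?_⟩
    have e1 : Real.cos (2 * t) = 2 * (w 0 / r) ^ 2 - 1 := by rw [Real.cos_two_mul, hc]
    have e2 : Real.sin (2 * t) = 2 * (-(w 2) / r) * (w 0 / r) := by
      rw [Real.sin_two_mul, hs, hc]
    funext i
    fin_cases i <;> simp [flow12, hc, hs, e1, e2] <;> field_simp
    · linear_combination s * h1 - h3
    · linear_combination (-1 : ℝ) * h4

/-- From the "circle data" (s, conditions), get everything. -/
lemma st15_branch2 (w : Fin 4 → ℝ) (s : ℝ) (hs2 : s ^ 2 = 1/3)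
    (h1 : w 0 ^ 2 + w 2 ^ 2 = 4/3)
    (c2 : w 1 * (4/3) = s * (w 0 ^ 2 - w 2 ^ 2))
    (c3 : w 3 * (4/3) = 2 * s * w 0 * w 2) :
    p2v w = 1 ∧ (∃ μ : ℝ, grad4 qbv w = μ • grad4 p2v w) ∧ qbv w = s/3 ∧
      w 1 ^ 2 + w 3 ^ 2 = 1/3 := by
  have hh2 : w 1 ^ 2 + w 3 ^ 2 = 1/3 := by
    linear_combination (3/4) * (w 1 + (3/4) * s * (w 0 ^ 2 - w 2 ^ 2)) * c2 +
      (3/4) * (w 3 + (3/2) * s * w 0 * w 2) * c3 +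
      (9/16) * s ^ 2 * (w 0 ^ 2 + w 2 ^ 2 + 4/3) * h1 + hs2
  have hp : p2v w = 1 := by unfold p2v; linear_combination (1/2) * h1 + hh2
  have hB : 2 * w 0 * w 2 * w 1 = ((w 0) ^ 2 - (w 2) ^ 2) * w 3 := by
    linear_combination (3/2) * w 0 * w 2 * c2 - (3/4) * (w 0 ^ 2 - w 2 ^ 2) * c3
  refine ⟨hp, (st15_part1 w hp).mpr (Or.inr ⟨h1, hh2, hB⟩), ?_, hh2⟩
  unfold qbv
  linear_combination (3/16) * (w 0 ^ 2 - w 2 ^ 2) * c2 + (3/8) * w 0 * w 2 * c3 +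
    (3/16) * s * (w 0 ^ 2 + w 2 ^ 2 + 4/3) * h1

/-- Converse: from branch-2 Lagrange data with a fixed sign, get circle data. -/
lemma st15_to_circle (w : Fin 4 → ℝ) (s : ℝ)
    (h1 : w 0 ^ 2 + w 2 ^ 2 = 4/3)
    (hB : 2 * w 0 * w 2 * w 1 = ((w 0) ^ 2 - (w 2) ^ 2) * w 3)
    (hA : ((w 0) ^ 2 - (w 2) ^ 2) * w 1 + 2 * w 0 * w 2 * w 3 = (4/3) * s) :
    w 1 * (4/3) = s * (w 0 ^ 2 - w 2 ^ 2) ∧ w 3 * (4/3) = 2 * s * w 0 * w 2 := by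
  constructor
  · linear_combination (3/4) * (w 0 ^ 2 - w 2 ^ 2) * hA + (3/2) * w 0 * w 2 * hB -
      (3/4) * w 1 * (w 0 ^ 2 + w 2 ^ 2 + 4/3) * h1
  · linear_combination (3/2) * w 0 * w 2 * hA - (3/4) * (w 0 ^ 2 - w 2 ^ 2) * hB -
      (3/4) * w 3 * (w 0 ^ 2 + w 2 ^ 2 + 4/3) * h1

lemma st15_A2 (w : Fin 4 → ℝ)
    (h1 : w 0 ^ 2 + w 2 ^ 2 = 4/3) (h2 : w 1 ^ 2 + w 3 ^ 2 = 1/3)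
    (hB : 2 * w 0 * w 2 * w 1 = ((w 0) ^ 2 - (w 2) ^ 2) * w 3) :
    (((w 0) ^ 2 - (w 2) ^ 2) * w 1 + 2 * w 0 * w 2 * w 3) ^ 2 = 16/27 := by
  linear_combination (-(2 * w 0 * w 2 * w 1 - ((w 0) ^ 2 - (w 2) ^ 2) * w 3)) * hB +
    ((w 1 ^ 2 + w 3 ^ 2) * (w 0 ^ 2 + w 2 ^ 2 + 4/3)) * h1 + (16/9) * h2

-- ASSEMBLY HELPERS

lemma st15_h3 : Real.sqrt 3 ^ 2 = 3 := Real.sq_sqrt (by norm_num)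

lemma st15_h43 : (2 * Real.sqrt 3 / 3) ^ 2 = 4/3 := by
  linear_combination (4/9) * st15_h3

lemma st15_hs13 : (Real.sqrt 3 / 3) ^ 2 = 1/3 := by
  linear_combination (1/9) * st15_h3

lemma st15_h27 : ((4:ℝ) * Real.sqrt 3 / 9) ^ 2 = 16/27 := by
  linear_combination (16/81) * st15_h3

/-- Lagrange criticality of `q` on `p₂⁻¹(1)` holds iff `x₁ = ξ₁ = 0` or
`x₁² + ξ₁² = 4/3`, `x₂² + ξ₂² = 1/3`, `2x₁ξ₁x₂ = (x₁² − ξ₁²)ξ₂`; the critical values are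
exactly `{−√3/9, 0, √3/9}`; and the critical set consists of exactly three disjoint
circles, each a single closed trajectory of the Hamiltonian flow of `p₂`. -/
theorem statement15 :
    (∀ v : Fin 4 → ℝ, p2v v = 1 →
      ((∃ μ : ℝ, grad4 qbv v = μ • grad4 p2v v) ↔
        ((v 0 = 0 ∧ v 2 = 0) ∨
         ((v 0) ^ 2 + (v 2) ^ 2 = 4 / 3 ∧ (v 1) ^ 2 + (v 3) ^ 2 = 1 / 3 ∧
           2 * v 0 * v 2 * v 1 = ((v 0) ^ 2 - (v 2) ^ 2) * v 3)))) ∧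
    ({F : ℝ | ∃ v : Fin 4 → ℝ,
        p2v v = 1 ∧ (∃ μ : ℝ, grad4 qbv v = μ • grad4 p2v v) ∧ qbv v = F}
      = {-(Real.sqrt 3 / 9), 0, Real.sqrt 3 / 9}) ∧
    (∃ C1 C2 C3 : Set (Fin 4 → ℝ),
      {v : Fin 4 → ℝ | p2v v = 1 ∧ ∃ μ : ℝ, grad4 qbv v = μ • grad4 p2v v}
        = C1 ∪ C2 ∪ C3 ∧
      C1 ∩ C2 = ∅ ∧ C1 ∩ C3 = ∅ ∧ C2 ∩ C3 = ∅ ∧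
      (∃ v, C1 = Set.range (fun t => flow12 t v)) ∧
      (∃ v, C2 = Set.range (fun t => flow12 t v)) ∧
      (∃ v, C3 = Set.range (fun t => flow12 t v))) := by
  have h43 := st15_h43
  have hs13 := st15_hs13
  have hns13 : (-(Real.sqrt 3 / 3)) ^ 2 = 1/3 := by linear_combination (1/9) * st15_h3
  have hr0 : 2 * Real.sqrt 3 / 3 ≠ 0 := by positivity
  -- witnesses for the positive / negative critical value
  have hwitP := st15_branch2 ![2 * Real.sqrt 3 / 3, Real.sqrt 3 / 3, 0, 0] (Real.sqrt 3 / 3)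
      hs13
      (by show (2 * Real.sqrt 3 / 3) ^ 2 + (0:ℝ) ^ 2 = 4/3
          linear_combination (4/9) * st15_h3)
      (by show (Real.sqrt 3 / 3) * (4/3)
            = (Real.sqrt 3 / 3) * ((2 * Real.sqrt 3 / 3) ^ 2 - (0:ℝ) ^ 2)
          linear_combination (-(4 * Real.sqrt 3 / 27)) * st15_h3)
      (by show (0:ℝ) * (4/3) = 2 * (Real.sqrt 3 / 3) * (2 * Real.sqrt 3 / 3) * 0
          ring)
  have hwitN := st15_branch2 ![2 * Real.sqrt 3 / 3, -(Real.sqrt 3 / 3), 0, 0] (-(Real.sqrt 3 / 3))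
      hns13
      (by show (2 * Real.sqrt 3 / 3) ^ 2 + (0:ℝ) ^ 2 = 4/3
          linear_combination (4/9) * st15_h3)
      (by show (-(Real.sqrt 3 / 3)) * (4/3)
            = (-(Real.sqrt 3 / 3)) * ((2 * Real.sqrt 3 / 3) ^ 2 - (0:ℝ) ^ 2)
          linear_combination ((4 * Real.sqrt 3 / 27)) * st15_h3)
      (by show (0:ℝ) * (4/3) = 2 * (-(Real.sqrt 3 / 3)) * (2 * Real.sqrt 3 / 3) * 0
          ring)
  have hwit0P : p2v ![0, 1, 0, 0] = 1 := by norm_num [p2v, Matrix.cons_val_two, Matrix.cons_val_three, Matrix.tail_cons, Matrix.head_cons]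
  refine ⟨st15_part1, ?_, ?_⟩
  · -- critical values
    ext F
    simp only [Set.mem_setOf_eq, Set.mem_insert_iff, Set.mem_singleton_iff]
    constructor
    · rintro ⟨v, hp, hl, rfl⟩
      rcases (st15_part1 v hp).mp hl with ⟨h0, h2⟩ | ⟨h1, h2, hB⟩
      · refine Or.inr (Or.inl ?_)
        unfold qbv; rw [h0, h2]; ring
      · have hA2 := st15_A2 v h1 h2 hB
        have hkk : ((((v 0) ^ 2 - (v 2) ^ 2) * v 1 + 2 * v 0 * v 2 * v 3) - 4 * Real.sqrt 3 / 9)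
            * ((((v 0) ^ 2 - (v 2) ^ 2) * v 1 + 2 * v 0 * v 2 * v 3) + 4 * Real.sqrt 3 / 9) = 0 := by
          linear_combination hA2 - st15_h27
        rcases mul_eq_zero.mp hkk with hA | hA
        · refine Or.inr (Or.inr ?_)
          have hA' := sub_eq_zero.mp hA
          unfold qbv
          linear_combination (1/4) * hA'
        · refine Or.inl ?_
          have hA' : (((v 0) ^ 2 - (v 2) ^ 2) * v 1 + 2 * v 0 * v 2 * v 3)
              = -(4 * Real.sqrt 3 / 9) := by linear_combination hA
          unfold qbv
          linear_combination (1/4) * hA'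
    · rintro (rfl | rfl | rfl)
      · exact ⟨_, hwitN.1, hwitN.2.1, by rw [hwitN.2.2.1]; ring⟩
      · refine ⟨![0, 1, 0, 0], hwit0P, (st15_part1 _ hwit0P).mpr (Or.inl ⟨by simp, rfl⟩), ?_⟩
        norm_num [qbv, Matrix.cons_val_two, Matrix.cons_val_three, Matrix.tail_cons, Matrix.head_cons]
      · exact ⟨_, hwitP.1, hwitP.2.1, by rw [hwitP.2.2.1]; ring⟩
  · -- the three circles
    refine ⟨Set.range (fun t => flow12 t ![0, 1, 0, 0]),
      Set.range (fun t => flow12 t ![2 * Real.sqrt 3 / 3, Real.sqrt 3 / 3, 0, 0]),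
      Set.range (fun t => flow12 t ![2 * Real.sqrt 3 / 3, -(Real.sqrt 3 / 3), 0, 0]),
      ?_, ?_, ?_, ?_, ⟨_, rfl⟩, ⟨_, rfl⟩, ⟨_, rfl⟩⟩
    · -- union
      rw [st15_range0, st15_range _ _ hr0, st15_range _ _ hr0, h43, hs13, hns13]
      ext w
      simp only [Set.mem_setOf_eq, Set.mem_union]
      constructor
      · rintro ⟨hp, hl⟩
        rcases (st15_part1 w hp).mp hl with ⟨h0, h2⟩ | ⟨h1, h2, hB⟩
        · refine Or.inl (Or.inl ⟨h0, h2, ?_⟩)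
          unfold p2v at hp
          rw [h0, h2] at hp
          linarith
        · have hA2 := st15_A2 w h1 h2 hB
          have hkk : ((((w 0) ^ 2 - (w 2) ^ 2) * w 1 + 2 * w 0 * w 2 * w 3) - 4 * Real.sqrt 3 / 9)
              * ((((w 0) ^ 2 - (w 2) ^ 2) * w 1 + 2 * w 0 * w 2 * w 3) + 4 * Real.sqrt 3 / 9) = 0 := by
            linear_combination hA2 - st15_h27
          rcases mul_eq_zero.mp hkk with hA | hA
          · have hA' : (((w 0) ^ 2 - (w 2) ^ 2) * w 1 + 2 * w 0 * w 2 * w 3)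
                = (4/3) * (Real.sqrt 3 / 3) := by
              linear_combination sub_eq_zero.mp hA
            obtain ⟨d2, d3⟩ := st15_to_circle w (Real.sqrt 3 / 3) h1 hB hA'
            exact Or.inl (Or.inr ⟨h1, h2, d2, d3⟩)
          · have hA' : (((w 0) ^ 2 - (w 2) ^ 2) * w 1 + 2 * w 0 * w 2 * w 3)
                = (4/3) * (-(Real.sqrt 3 / 3)) := by linear_combination hA
            obtain ⟨d2, d3⟩ := st15_to_circle w (-(Real.sqrt 3 / 3)) h1 hB hA'
            exact Or.inr ⟨h1, h2, d2, d3⟩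
      · rintro ((⟨h0, h2, h13⟩ | ⟨h1, h2, d2, d3⟩) | ⟨h1, h2, d2, d3⟩)
        · have hp : p2v w = 1 := by unfold p2v; rw [h0, h2]; linear_combination h13
          exact ⟨hp, (st15_part1 w hp).mpr (Or.inl ⟨h0, h2⟩)⟩
        · obtain ⟨hp, hl, _, _⟩ := st15_branch2 w (Real.sqrt 3 / 3) hs13 h1 d2 d3
          exact ⟨hp, hl⟩
        · obtain ⟨hp, hl, _, _⟩ := st15_branch2 w (-(Real.sqrt 3 / 3)) hns13 h1 d2 d3
          exact ⟨hp, hl⟩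
    · -- C1 ∩ C2 = ∅
      rw [st15_range0, st15_range _ _ hr0, h43]
      rw [Set.eq_empty_iff_forall_notMem]
      rintro w ⟨⟨a0, a2, -⟩, ⟨b1, -, -, -⟩⟩
      rw [a0, a2] at b1
      norm_num at b1
    · -- C1 ∩ C3 = ∅
      rw [st15_range0, st15_range _ _ hr0, h43]
      rw [Set.eq_empty_iff_forall_notMem]
      rintro w ⟨⟨a0, a2, -⟩, ⟨b1, -, -, -⟩⟩
      rw [a0, a2] at b1
      norm_num at b1
    · -- C2 ∩ C3 = ∅
      rw [st15_range _ _ hr0, st15_range _ _ hr0, h43]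
      rw [Set.eq_empty_iff_forall_notMem]
      rintro w ⟨⟨h1, -, c2, c3⟩, ⟨-, -, c2', c3'⟩⟩
      have hX : (2 * Real.sqrt 3 / 3) * (w 0 ^ 2 - w 2 ^ 2) = 0 := by
        linear_combination c2' - c2
      have hY : (2 * Real.sqrt 3 / 3) * (w 0 * w 2) = 0 := by
        linear_combination (1/2) * c3' - (1/2) * c3
      have hX' := (mul_eq_zero.mp hX).resolve_left hr0
      have hY' := (mul_eq_zero.mp hY).resolve_left hr0
      rcases mul_eq_zero.mp hY' with h | h <;> nlinarith [h1, hX', h]
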